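/- Let (Q_s) be a finite orthogonal resolution of the identity and P an orthogonal projection on a finite-dimensional complex Hilbert space. If ∑_s Q_s P Q_s = P, then P Q_k = Q_k P for every k. -/
import Mathlib


open Matrix ComplexOrder

/-- Operator core of Lüders' ignored-measurement theorem: if
`∑_s Q_s P Q_s = P` then `P` commutes with each `Q_k`. -/
theorem luders_ignored_core {n : ℕ} {S : Type*} [Fintype S]
    (Q : S → Matrix (Fin n) (Fin n) ℂ) (P : Matrix (Fin n) (Fin n) ℂ)
    (hQsa : ∀ s, (Q s)ᴴ = Q s) (hQidem : ∀ s, Q s * Q s = Q s)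
    (hQorth : ∀ s s', s ≠ s' → Q s * Q s' = 0)
    (hQsum : ∑ s, Q s = 1)
    (hPsa : Pᴴ = P) (hPidem : P * P = P)
    (h : ∑ s, Q s * P * Q s = P) :
    ∀ k, P * Q k = Q k * P := by
  intro k
  have hl : Q k * P = Q k * P * Q k := by
    conv_lhs => rw [← h]
    rw [Finset.mul_sum, Finset.sum_eq_single k]
    · rw [← mul_assoc, ← mul_assoc, hQidem k]
    · intro s _ hs
      rw [← mul_assoc, ← mul_assoc, hQorth k s (Ne.symm hs), zero_mul, zero_mul]
    · simp
  have hr : P * Q k = Q k * P * Q k := by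
    conv_lhs => rw [← h]
    rw [Finset.sum_mul, Finset.sum_eq_single k]
    · rw [mul_assoc, hQidem k]
    · intro s _ hs
      rw [mul_assoc, hQorth s k hs, mul_zero]
    · simp
  rw [hl, hr]
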